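/- Let g : ℕ → ℝ be a nonnegative nonincreasing function with g extended so that g(0)=0, and let m, n be positive integers with n ≤ m. Define σ(ε) = max{ |supp(f)| : f ∈ ℕ^n, ∑_d f_d ≤ m, ∑_{d ∈ supp(f)} g(f_d) ≤ ε⁻¹ g(1) }, where supp(f) = {d : f_d ≠ 0}. Then for all 0 < α < ε, we have ε·(1 + σ(ε)) ≥ α·σ(α). -/

import Mathlib

lemma subset_avg {ι : Type*} [DecidableEq ι] (w : ι → ℝ) (hw : ∀ i, 0 ≤ w i) (S : Finset ι) :
    ∀ j : ℕ, j ≤ S.card → ∃ T ⊆ S, T.card = S.card - j ∧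
      (S.card : ℝ) * ∑ i ∈ T, w i ≤ (T.card : ℝ) * ∑ i ∈ S, w i := by
  intro j
  induction j with
  | zero => intro _; exact ⟨S, Finset.Subset.refl S, by simp, le_refl _⟩
  | succ j ih =>
    intro hj
    obtain ⟨T, hTS, hTc, hT⟩ := ih (Nat.le_of_succ_le hj)
    have hTpos : 0 < T.card := by omega
    obtain ⟨b, hb, hmax⟩ := Finset.exists_max_image T w ⟨_, Finset.card_pos.mp hTpos |>.choose_spec⟩
    refine ⟨T.erase b, (Finset.erase_subset _ _).trans hTS, by
      rw [Finset.card_erase_of_mem hb]; omega, ?_⟩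
    have hec : ((T.erase b).card : ℝ) = (T.card : ℝ) - 1 := by
      rw [Finset.card_erase_of_mem hb, Nat.cast_sub hTpos]; push_cast; ring
    have hes : ∑ i ∈ T.erase b, w i = (∑ i ∈ T, w i) - w b := by
      rw [← Finset.sum_erase_add T w hb]; ring
    have h1 : ∑ i ∈ T, w i ≤ (T.card : ℝ) * w b := by
      calc ∑ i ∈ T, w i ≤ ∑ _i ∈ T, w b := Finset.sum_le_sum (fun i hi => hmax i hi)
        _ = (T.card : ℝ) * w b := by rw [Finset.sum_const]; push_cast; ring
    have hSnn : (0:ℝ) ≤ ∑ i ∈ S, w i := Finset.sum_nonneg fun i _ => hw i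
    have hTnn : (0:ℝ) ≤ ∑ i ∈ T, w i := Finset.sum_nonneg fun i _ => hw i
    have hcard : (T.card : ℝ) ≤ (S.card : ℝ) := by
      exact_mod_cast Finset.card_le_card hTS
    have hT1 : (1:ℝ) ≤ (T.card : ℝ) := by exact_mod_cast hTpos
    rw [hec, hes]
    nlinarith [mul_le_mul_of_nonneg_left h1 (Nat.cast_nonneg S.card : (0:ℝ) ≤ S.card),
      mul_le_mul_of_nonneg_right hT ((sub_nonneg.mpr hT1)), hw b]

/-- The maximum support size of a nonnegative integer frequency vector with
`L¹` norm at most `m` whose `g`-sum over its support is at most `ε⁻¹ * g 1`. -/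
noncomputable def sigma (g : ℕ → ℝ) (ε : ℝ) (m n : ℕ) : ℕ :=
  sSup {k : ℕ | ∃ f : Fin n → ℕ, (∑ d, f d) ≤ m ∧
    (∑ d ∈ Finset.univ.filter (fun d => f d ≠ 0), g (f d)) ≤ ε⁻¹ * g 1 ∧
    k = (Finset.univ.filter (fun d => f d ≠ 0)).card}

theorem stmt_1 (g : ℕ → ℝ) (hg0 : g 0 = 0) (hgnn : ∀ x, 0 ≤ g x)
    (hgdec : ∀ x y : ℕ, 1 ≤ x → x ≤ y → g y ≤ g x)
    (m n : ℕ) (hm : 0 < m) (hn : 0 < n) (hnm : n ≤ m)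
    (α ε : ℝ) (hα : 0 < α) (hαε : α < ε) :
    ε * (1 + (sigma g ε m n : ℝ)) ≥ α * (sigma g α m n : ℝ) := by
  have hε : 0 < ε := hα.trans hαε
  set A : ℝ → Set ℕ := fun e => {k : ℕ | ∃ f : Fin n → ℕ, (∑ d, f d) ≤ m ∧
    (∑ d ∈ Finset.univ.filter (fun d => f d ≠ 0), g (f d)) ≤ e⁻¹ * g 1 ∧
    k = (Finset.univ.filter (fun d => f d ≠ 0)).card} with hA
  have hbdd : ∀ e : ℝ, BddAbove (A e) := by
    intro e
    refine ⟨n, fun k hk => ?_⟩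
    obtain ⟨f, _, _, hk⟩ := hk
    rw [hk]
    exact (Finset.card_filter_le _ _).trans (by simp)
  have hzero : ∀ e : ℝ, 0 < e → 0 ∈ A e := by
    intro e he
    refine ⟨fun _ => 0, by simp, ?_, by simp⟩
    simp only [ne_eq, not_true_eq_false, Finset.filter_false, Finset.sum_empty]
    exact mul_nonneg (inv_nonneg.mpr he.le) (hgnn 1)
  -- the witness for σ(α)
  have hmem : sigma g α m n ∈ A α :=
    Nat.sSup_mem ⟨0, hzero α hα⟩ (hbdd α)
  obtain ⟨f, hfm, hfg, hfk⟩ := hmem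
  set k := sigma g α m n with hk
  set S := Finset.univ.filter (fun d => f d ≠ 0) with hS
  rcases Nat.eq_zero_or_pos k with hk0 | hkpos
  · rw [hk0]
    have : (0:ℝ) ≤ ε * (1 + (sigma g ε m n : ℝ)) := by positivity
    simpa using this
  -- choose t = ⌊k * α / ε⌋
  set x : ℝ := (k : ℝ) * α / ε with hx
  have hxnn : 0 ≤ x := by positivity
  set t : ℕ := ⌊x⌋₊ with ht
  have htx : (t : ℝ) ≤ x := Nat.floor_le hxnn
  have hxt1 : x < t + 1 := Nat.lt_floor_add_one x
  have htk : t ≤ k := by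
    have : x ≤ (k : ℝ) := by
      rw [hx, div_le_iff₀ hε]
      nlinarith [hαε.le]
    exact_mod_cast (htx.trans this)
  obtain ⟨T, hTS, hTc, hTsum⟩ := subset_avg (fun d => g (f d)) (fun d => hgnn _) S (k - t)
    (by rw [← hfk]; omega)
  have hTcard : T.card = t := by rw [hTc, ← hfk]; omega
  -- the restricted vector
  set f' : Fin n → ℕ := fun d => if d ∈ T then f d else 0 with hf'
  have hsupp : Finset.univ.filter (fun d => f' d ≠ 0) = T := by
    ext d
    simp only [Finset.mem_filter, Finset.mem_univ, true_and, hf']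
    constructor
    · intro h
      by_contra hd
      simp [hd] at h
    · intro hd
      have := hTS hd
      rw [hS, Finset.mem_filter] at this
      simpa [hd] using this.2
  have hsum1 : (∑ d, f' d) ≤ m := by
    calc (∑ d, f' d) = ∑ d ∈ T, f d := by
          rw [hf', Finset.sum_ite_mem, Finset.univ_inter]
      _ ≤ ∑ d, f d := Finset.sum_le_sum_of_subset (Finset.subset_univ T)
      _ ≤ m := hfm
  have hTnn : (0:ℝ) ≤ ∑ d ∈ T, g (f d) := Finset.sum_nonneg fun d _ => hgnn _
  have hsum2 : (∑ d ∈ Finset.univ.filter (fun d => f' d ≠ 0), g (f' d)) ≤ ε⁻¹ * g 1 := by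
    rw [hsupp]
    have heq : ∑ d ∈ T, g (f' d) = ∑ d ∈ T, g (f d) :=
      Finset.sum_congr rfl fun d hd => by
        show g (if d ∈ T then f d else 0) = g (f d)
        rw [if_pos hd]
    rw [heq]
    -- k * ∑_T ≤ t * ∑_S ≤ t * α⁻¹ * g1, and t * ε ≤ k * α
    have h1 : (k : ℝ) * ∑ d ∈ T, g (f d) ≤ (t : ℝ) * ∑ d ∈ S, g (f d) := by
      rw [← hfk] at hTsum; rwa [hTcard] at hTsum
    have h2 : (t : ℝ) * ∑ d ∈ S, g (f d) ≤ (t : ℝ) * (α⁻¹ * g 1) :=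
      mul_le_mul_of_nonneg_left hfg (Nat.cast_nonneg t)
    have h3 : (t : ℝ) * ε ≤ (k : ℝ) * α := by
      rw [hx, div_eq_mul_inv] at htx
      have h := mul_le_mul_of_nonneg_right htx hε.le
      rwa [mul_assoc, inv_mul_cancel₀ hε.ne', mul_one] at h
    have hkpos' : (0:ℝ) < k := by exact_mod_cast hkpos
    have hg1 : 0 ≤ g 1 := hgnn 1
    have key : (k : ℝ) * ε * ∑ d ∈ T, g (f d) ≤ (k : ℝ) * ε * (ε⁻¹ * g 1) := by
      have e1 : (k:ℝ) * ε * ∑ d ∈ T, g (f d) = ε * ((k:ℝ) * ∑ d ∈ T, g (f d)) := by ring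
      have e2 : (k:ℝ) * ε * (ε⁻¹ * g 1) = (ε * ε⁻¹) * ((k:ℝ) * g 1) := by ring
      rw [e1, e2, mul_inv_cancel₀ hε.ne', one_mul]
      calc ε * ((k:ℝ) * ∑ d ∈ T, g (f d)) ≤ ε * ((t:ℝ) * (α⁻¹ * g 1)) := by
            apply mul_le_mul_of_nonneg_left (h1.trans h2) hε.le
        _ ≤ (k:ℝ) * g 1 := by
            have : ε * ((t:ℝ) * (α⁻¹ * g 1)) = ((t:ℝ) * ε) * (α⁻¹ * g 1) := by ring
            rw [this]
            calc ((t:ℝ) * ε) * (α⁻¹ * g 1) ≤ ((k:ℝ) * α) * (α⁻¹ * g 1) := by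
                  apply mul_le_mul_of_nonneg_right h3 (by positivity)
              _ = (α * α⁻¹) * ((k:ℝ) * g 1) := by ring
              _ = (k:ℝ) * g 1 := by rw [mul_inv_cancel₀ hα.ne', one_mul]
    have hkε : (0:ℝ) < (k:ℝ) * ε := by positivity
    exact le_of_mul_le_mul_left key hkε
  -- t ∈ A ε
  have htA : t ∈ A ε := ⟨f', hsum1, hsum2, by rw [hsupp, hTcard]⟩
  have hσε : (t : ℕ) ≤ sigma g ε m n := le_csSup (hbdd ε) htA
  have hσεR : (t : ℝ) ≤ (sigma g ε m n : ℝ) := by exact_mod_cast hσε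
  have : α * (k : ℝ) = ε * x := by
    rw [hx]; field_simp
  rw [ge_iff_le, this]
  have : ε * x ≤ ε * ((t:ℝ) + 1) := mul_le_mul_of_nonneg_left hxt1.le hε.le
  calc ε * x ≤ ε * ((t:ℝ) + 1) := this
    _ ≤ ε * (1 + (sigma g ε m n : ℝ)) := by nlinarith
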